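/- Spectral form of the converse direction of Theorem 2: let n ≥ 1, let ρ be a 2×2 complex positive semidefinite matrix with trace 1 and eigenvalues s and 1−s where 0 < s < 1, and let σ be a complex positive semidefinite m×m matrix. If every nonzero eigenvalue of the Kronecker product ρ ⊗ σ equals 2^{−n} (i.e., the nonzero spectrum of ρ ⊗ σ coincides, as a multiset, with the spectrum of the reduced state of n copies of the maximally entangled two-qubit state), then s = 1/2. -/

import Mathlib

open Matrix Kronecker Polynomial
open scoped ComplexOrder

section AuxCharpoly

variable {R : Type*} [CommRing R] {n : Type*} [DecidableEq n] [Fintype n]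

lemma aux_charpoly_conj (P A Q : Matrix n n R) (hPQ : P * Q = 1) :
    (P * A * Q).charpoly = A.charpoly := by
  have hmap : (P * Q).map (C : R →+* R[X]) = 1 := by
    rw [hPQ, Matrix.map_one _ (map_zero C) (map_one C)]
  have hPQ' : P.map (C : R →+* R[X]) * Q.map C = 1 := by
    rw [← Matrix.map_mul]; exact hmap
  have h1 : charmatrix (P * A * Q) = P.map C * charmatrix A * Q.map C := by
    unfold charmatrix
    rw [Matrix.mul_sub, Matrix.sub_mul]
    congr 1
    · rw [scalar_apply, ← Matrix.smul_one_eq_diagonal, mul_smul_comm, smul_mul_assoc, mul_one,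
        hPQ']
    · simp only [RingHom.mapMatrix_apply]
      rw [← Matrix.map_mul, ← Matrix.map_mul]
  rw [Matrix.charpoly, Matrix.charpoly, h1, det_mul, det_mul]
  calc (P.map C).det * (charmatrix A).det * (Q.map C).det
      = (charmatrix A).det * ((P.map C).det * (Q.map C).det) := by ring
    _ = (charmatrix A).det := by rw [← det_mul, hPQ', det_one, mul_one]

lemma aux_charpoly_diagonal (d : n → R) :
    (Matrix.diagonal d).charpoly = ∏ i, (X - C (d i)) := by
  have : charmatrix (Matrix.diagonal d) = Matrix.diagonal (fun i => X - C (d i)) := by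
    ext i j
    by_cases hij : i = j
    · subst hij; simp
    · simp [hij, Matrix.diagonal_apply_ne _ hij]
  rw [Matrix.charpoly, this, det_diagonal]

end AuxCharpoly

open Classical in
/-- Spectral form of the converse direction of Theorem 2: let `ρ` be a `2×2` positive
semidefinite matrix with trace `1` and eigenvalues `s` and `1−s` (`0 < s < 1`), and let
`σ` be positive semidefinite. If the nonzero spectrum of `ρ ⊗ σ` coincides, as a
multiset, with the spectrum of the reduced state of `n` copies of the maximally
entangled two-qubit state (i.e. `2ⁿ` eigenvalues all equal to `2^{−n}`), then `s = 1/2`. -/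
theorem spectral_thm2_converse (n : ℕ) (hn : 1 ≤ n) (s : ℝ) (hs0 : 0 < s) (hs1 : s < 1)
    (ρ : Matrix (Fin 2) (Fin 2) ℂ) (hρ : ρ.PosSemidef) (htr : ρ.trace = 1)
    (hev : ρ.charpoly = (X - C (s : ℂ)) * (X - C (1 - (s : ℂ))))
    (m : ℕ) (σ : Matrix (Fin m) (Fin m) ℂ) (hσ : σ.PosSemidef)
    (h : (ρ ⊗ₖ σ).charpoly.roots.filter (fun z => z ≠ 0) =
         Multiset.replicate (2 ^ n) (((2 : ℂ) ^ n)⁻¹)) :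
    s = 1 / 2 := by
  obtain ⟨hρh, -⟩ := hρ
  obtain ⟨hσh, -⟩ := hσ
  set μ : Fin 2 → ℝ := hρh.eigenvalues with hμ
  set ν : Fin m → ℝ := hσh.eigenvalues with hν
  set U : Matrix (Fin 2) (Fin 2) ℂ := (hρh.eigenvectorUnitary : Matrix (Fin 2) (Fin 2) ℂ) with hU
  set V : Matrix (Fin m) (Fin m) ℂ := (hσh.eigenvectorUnitary : Matrix (Fin m) (Fin m) ℂ) with hV
  have hUu : U * star U = 1 := (Matrix.mem_unitaryGroup_iff).mp hρh.eigenvectorUnitary.2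
  have hVu : V * star V = 1 := (Matrix.mem_unitaryGroup_iff).mp hσh.eigenvectorUnitary.2
  -- charpoly of ρ
  have hρcp : ρ.charpoly = ∏ i, (X - C ((μ i : ℂ))) := by
    rw [hρh.spectral_theorem, Unitary.conjStarAlgAut_apply, aux_charpoly_conj _ _ _ hUu, aux_charpoly_diagonal]
    rfl
  -- multiset of eigenvalues of ρ
  have hμset : ({((μ 0 : ℂ)), ((μ 1 : ℂ))} : Multiset ℂ) = {(s : ℂ), (1 - s : ℂ)} := by
    have h2 : (X - C ((μ 0 : ℂ))) * (X - C ((μ 1 : ℂ)))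
        = (X - C (s : ℂ)) * (X - C (1 - (s : ℂ))) := by
      rw [← Fin.prod_univ_two (fun i => (X - C ((μ i : ℂ)))), ← hρcp, hev]
    have := congrArg Polynomial.roots h2
    rwa [Polynomial.roots_mul (mul_ne_zero (X_sub_C_ne_zero _) (X_sub_C_ne_zero _)),
      Polynomial.roots_mul (mul_ne_zero (X_sub_C_ne_zero _) (X_sub_C_ne_zero _)),
      roots_X_sub_C, roots_X_sub_C, roots_X_sub_C, roots_X_sub_C] at this
  have hsne : (s : ℂ) ≠ 0 := by exact_mod_cast hs0.ne'
  have h1sne : (1 - (s : ℂ)) ≠ 0 := by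
    have : (1 - s : ℝ) ≠ 0 := by linarith
    exact_mod_cast (by push_cast; exact_mod_cast this : ((1 - s : ℝ) : ℂ) ≠ 0)
  have hμne : ∀ i, ((μ i : ℂ)) ≠ 0 := by
    intro i
    have hmem : ((μ i : ℂ)) ∈ ({((μ 0 : ℂ)), ((μ 1 : ℂ))} : Multiset ℂ) := by
      fin_cases i <;> simp
    rw [hμset] at hmem
    rcases (by simpa using hmem : _ ∨ _) with h' | h' <;> rw [h']
    · exact hsne
    · exact h1sne
  -- charpoly of ρ ⊗ σ
  have hkron : ρ ⊗ₖ σ = (U ⊗ₖ V) *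
      (Matrix.diagonal (fun p : Fin 2 × Fin m => ((μ p.1 : ℂ)) * ((ν p.2 : ℂ)))) *
      ((star U) ⊗ₖ (star V)) := by
    conv_lhs => rw [hρh.spectral_theorem, hσh.spectral_theorem, Unitary.conjStarAlgAut_apply,
      Unitary.conjStarAlgAut_apply]
    rw [Matrix.mul_kronecker_mul, Matrix.mul_kronecker_mul,
      Matrix.diagonal_kronecker_diagonal]
    rfl
  have hUVu : (U ⊗ₖ V) * ((star U) ⊗ₖ (star V)) = 1 := by
    rw [← Matrix.mul_kronecker_mul, hUu, hVu, Matrix.one_kronecker_one]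
  have hroots : (ρ ⊗ₖ σ).charpoly.roots =
      Multiset.map (fun p : Fin 2 × Fin m => ((μ p.1 : ℂ)) * ((ν p.2 : ℂ)))
        Finset.univ.val := by
    rw [hkron, aux_charpoly_conj _ _ _ hUVu, aux_charpoly_diagonal,
      Finset.prod_eq_multiset_prod,
      show (Multiset.map (fun i : Fin 2 × Fin m => X - C (((μ i.1 : ℂ)) * ((ν i.2 : ℂ))))
          Finset.univ.val)
        = Multiset.map (fun a => X - C a)
            (Multiset.map (fun p : Fin 2 × Fin m => ((μ p.1 : ℂ)) * ((ν p.2 : ℂ)))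
              Finset.univ.val) from (Multiset.map_map (fun a => X - C a) _ _).symm,
      roots_multiset_prod_X_sub_C]
  -- get a nonzero eigenvalue of σ
  have hinvne : (((2 : ℂ) ^ n)⁻¹ : ℂ) ≠ 0 := by
    simp [pow_ne_zero]
  have hmem0 : (((2 : ℂ) ^ n)⁻¹ : ℂ) ∈ Multiset.replicate (2 ^ n) (((2 : ℂ) ^ n)⁻¹) :=
    Multiset.mem_replicate.2 ⟨by positivity, rfl⟩
  rw [← h] at hmem0
  obtain ⟨hmemroots, -⟩ := Multiset.mem_filter.mp hmem0
  rw [hroots] at hmemroots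
  obtain ⟨p, -, hp⟩ := Multiset.mem_map.mp hmemroots
  have hνne : ((ν p.2 : ℂ)) ≠ 0 := by
    intro h0
    rw [h0, mul_zero] at hp
    exact hinvne hp.symm
  -- both μ 0 * ν and μ 1 * ν are nonzero roots, so equal to the inverse
  have key : ∀ i : Fin 2, ((μ i : ℂ)) * ((ν p.2 : ℂ)) = ((2 : ℂ) ^ n)⁻¹ := by
    intro i
    have hmem : ((μ i : ℂ)) * ((ν p.2 : ℂ)) ∈
        (ρ ⊗ₖ σ).charpoly.roots.filter (fun z => z ≠ 0) := by
      rw [Multiset.mem_filter]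
      constructor
      · rw [hroots]
        exact Multiset.mem_map.mpr ⟨(i, p.2), Finset.mem_univ_val _, rfl⟩
      · exact mul_ne_zero (hμne i) hνne
    rw [h] at hmem
    exact Multiset.eq_of_mem_replicate hmem
  have hμeq : ((μ 0 : ℂ)) = ((μ 1 : ℂ)) :=
    mul_right_cancel₀ hνne (by rw [key 0, key 1])
  -- conclude s = 1 - s
  have hsmem : (s : ℂ) ∈ ({((μ 0 : ℂ)), ((μ 1 : ℂ))} : Multiset ℂ) := by
    rw [hμset]; simp
  have h1smem : (1 - (s : ℂ)) ∈ ({((μ 0 : ℂ)), ((μ 1 : ℂ))} : Multiset ℂ) := by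
    rw [hμset]; simp
  have hs' : (s : ℂ) = (μ 0 : ℂ) := by
    rcases (by simpa using hsmem : (s:ℂ) = (μ 0:ℂ) ∨ (s:ℂ) = (μ 1:ℂ)) with h' | h'
    · exact h'
    · rw [h', ← hμeq]
  have h1s' : (1 - (s : ℂ)) = (μ 0 : ℂ) := by
    rcases (by simpa using h1smem : (1 - (s:ℂ)) = (μ 0:ℂ) ∨ (1 - (s:ℂ)) = (μ 1:ℂ)) with h' | h'
    · exact h'
    · rw [h', ← hμeq]
  have hfin : (s : ℂ) = 1 - (s : ℂ) := hs'.trans h1s'.symm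
  have hre : s = 1 - s := by exact_mod_cast hfin
  linarith
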